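/- Let A : ℝ → Matrix n n ℂ be a continuous matrix-valued function, let t > 0, and let Y : ℂ → ℝ → Matrix n n ℂ be such that for every κ ∈ ℂ, the function s ↦ Y(κ, s) satisfies ∂Y/∂s (κ, s) = κ · A(s) · Y(κ, s) for all s and Y(κ, 0) = I. Then for each fixed s ∈ ℝ, the map κ ↦ Y(κ, s) is holomorphic on all of ℂ (i.e., each matrix entry is an entire function of κ). -/

import Mathlib

attribute [local instance] Matrix.normedAddCommGroup Matrix.normedSpace

open intervalIntegral Finset

lemma mat_norm_mul_le {n : Type*} [Fintype n] [DecidableEq n] (X Z : Matrix n n ℂ) :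
    ‖X * Z‖ ≤ (Fintype.card n : ℝ) * ‖X‖ * ‖Z‖ := by
  rcases isEmpty_or_nonempty n with h | h
  · simp [Matrix.norm_le_iff, Subsingleton.elim (X*Z) 0]
  rw [mul_assoc, Matrix.norm_le_iff (by positivity)]
  intro i j
  calc ‖(X*Z) i j‖ = ‖∑ k, X i k * Z k j‖ := by rw [Matrix.mul_apply]
  _ ≤ ∑ k, ‖X i k * Z k j‖ := norm_sum_le _ _
  _ ≤ ∑ _k : n, ‖X‖ * ‖Z‖ := by
      refine Finset.sum_le_sum fun k _ => ?_
      exact (norm_mul_le _ _).trans (mul_le_mul (Matrix.norm_entry_le_entrywise_sup_norm _)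
        (Matrix.norm_entry_le_entrywise_sup_norm _) (norm_nonneg _) (norm_nonneg _))
  _ = (Fintype.card n : ℝ) * (‖X‖ * ‖Z‖) := by
      rw [Finset.sum_const, Finset.card_univ, nsmul_eq_mul]

noncomputable def picardIt {n : Type*} [Fintype n] [DecidableEq n]
    (A : ℝ → Matrix n n ℂ) : ℕ → ℝ → Matrix n n ℂ
  | 0 => fun _ => 1
  | (k+1) => fun u => ∫ r in (0:ℝ)..u, A r * picardIt A k r

lemma picardIt_continuous {n : Type*} [Fintype n] [DecidableEq n]
    {A : ℝ → Matrix n n ℂ} (hA : Continuous A) (k : ℕ) : Continuous (picardIt A k) := by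
  induction k with
  | zero => exact continuous_const
  | succ k ih =>
    exact intervalIntegral.continuous_primitive
      (fun a b => ((hA.matrix_mul ih)).intervalIntegrable a b) 0

lemma key {n : Type*} [Fintype n] [DecidableEq n]
    (A : ℝ → Matrix n n ℂ) (hA : Continuous A)
    (Y : ℂ → ℝ → Matrix n n ℂ)
    (hY : ∀ κ : ℂ, ∀ s : ℝ, HasDerivAt (Y κ) (κ • A s * Y κ s) s)
    (hY0 : ∀ κ : ℂ, Y κ 0 = 1) {s : ℝ} (hs : 0 ≤ s) :
    Differentiable ℂ (fun κ => Y κ s) := by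
  classical
  set c : ℝ := (Fintype.card n : ℝ) with hc
  have hc0 : 0 ≤ c := Nat.cast_nonneg _
  -- bound on A
  obtain ⟨M0, hM0⟩ := (isCompact_Icc (a := (0:ℝ)) (b := s)).exists_bound_of_continuousOn
    hA.continuousOn
  set M : ℝ := max M0 0 with hMdef
  have hM : ∀ u ∈ Set.Icc (0:ℝ) s, ‖A u‖ ≤ M := fun u hu => (hM0 u hu).trans (le_max_left _ _)
  have hMnn : 0 ≤ M := le_max_right _ _
  have Ycont : ∀ κ, Continuous (Y κ) := fun κ =>
    Differentiable.continuous (fun u => (hY κ u).differentiableAt)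
  have icont : ∀ κ, Continuous fun r => κ • A r * Y κ r := fun κ =>
    (hA.const_smul κ).matrix_mul (Ycont κ)
  -- integral equation
  have inteq : ∀ κ u, Y κ u = 1 + ∫ r in (0:ℝ)..u, κ • A r * Y κ r := by
    intro κ u
    have := intervalIntegral.integral_eq_sub_of_hasDerivAt
      (f := Y κ) (f' := fun r => κ • A r * Y κ r)
      (fun r _ => hY κ r) ((icont κ).intervalIntegrable 0 u)
    rw [this, hY0 κ]; abel
  -- Gronwall bound
  have gron : ∀ κ : ℂ, ∀ u ∈ Set.Icc (0:ℝ) s,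
      ‖Y κ u‖ ≤ ‖(1 : Matrix n n ℂ)‖ * Real.exp (c * ‖κ‖ * M * u) := by
    intro κ u hu
    have := norm_le_gronwallBound_of_norm_deriv_right_le
      (f := Y κ) (f' := fun r => κ • A r * Y κ r)
      (δ := ‖(1 : Matrix n n ℂ)‖) (K := c * ‖κ‖ * M) (ε := 0) (a := 0) (b := s)
      ((Ycont κ).continuousOn)
      (fun x _ => (hY κ x).hasDerivWithinAt)
      (by rw [hY0 κ])
      (fun x hx => by
        have h1 : ‖κ • A x * Y κ x‖ ≤ c * ‖κ • A x‖ * ‖Y κ x‖ := mat_norm_mul_le _ _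
        have h2 : ‖κ • A x‖ = ‖κ‖ * ‖A x‖ := norm_smul _ _
        have h3 : ‖A x‖ ≤ M := hM x (Set.mem_Icc.2 ⟨hx.1, hx.2.le⟩)
        calc ‖κ • A x * Y κ x‖ ≤ c * (‖κ‖ * ‖A x‖) * ‖Y κ x‖ := by rw [← h2]; exact h1
        _ ≤ c * ‖κ‖ * M * ‖Y κ x‖ + 0 := by
            rw [add_zero]
            have : c * (‖κ‖ * ‖A x‖) ≤ c * ‖κ‖ * M := by
              rw [← mul_assoc]
              exact mul_le_mul_of_nonneg_left h3 (by positivity)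
            exact mul_le_mul_of_nonneg_right this (norm_nonneg _))
      u hu
    rw [gronwallBound_ε0, sub_zero] at this
    exact this
  -- error estimate
  set B : ℂ → ℝ := fun κ => ‖(1 : Matrix n n ℂ)‖ * Real.exp (c * ‖κ‖ * M * s) with hB
  have hBnn : ∀ κ, 0 ≤ B κ := fun κ => by positivity
  have gron' : ∀ κ : ℂ, ∀ u ∈ Set.Icc (0:ℝ) s, ‖Y κ u‖ ≤ B κ := by
    intro κ u hu
    refine (gron κ u hu).trans ?_
    refine mul_le_mul_of_nonneg_left (Real.exp_le_exp.2 ?_) (norm_nonneg _)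
    exact mul_le_mul_of_nonneg_left hu.2 (by positivity)
  -- helper: integral bound
  have helper : ∀ κ : ℂ, ∀ (g : ℝ → Matrix n n ℂ), Continuous g → ∀ (b : ℝ) (m : ℕ),
      0 ≤ b → (∀ r ∈ Set.Icc (0:ℝ) s, ‖g r‖ ≤ b * r ^ m / (Nat.factorial m)) →
      ∀ u ∈ Set.Icc (0:ℝ) s,
      ‖∫ r in (0:ℝ)..u, κ • A r * g r‖ ≤
        (c * ‖κ‖ * M) * b * u ^ (m+1) / (Nat.factorial (m+1)) := by
    intro κ g hg b m hb hbound u hu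
    have hu0 : (0:ℝ) ≤ u := hu.1
    have key1 : ‖∫ r in (0:ℝ)..u, κ • A r * g r‖ ≤
        |∫ r in (0:ℝ)..u, (c * ‖κ‖ * M) * (b * r ^ m / (Nat.factorial m))| := by
      refine intervalIntegral.norm_integral_le_abs_of_norm_le ?_ ?_
      · refine (MeasureTheory.ae_restrict_iff' measurableSet_uIoc).2 ?_
        refine Filter.Eventually.of_forall (fun r hr => ?_)
        rw [Set.uIoc_of_le hu0] at hr
        have hrs : r ∈ Set.Icc (0:ℝ) s := ⟨hr.1.le, hr.2.trans hu.2⟩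
        have h1 : ‖κ • A r * g r‖ ≤ c * (‖κ‖ * ‖A r‖) * ‖g r‖ := by
          have := mat_norm_mul_le (κ • A r) (g r)
          rwa [norm_smul] at this
        calc ‖κ • A r * g r‖ ≤ c * (‖κ‖ * ‖A r‖) * ‖g r‖ := h1
        _ ≤ (c * ‖κ‖ * M) * (b * r ^ m / (Nat.factorial m)) := by
            have e1 : c * (‖κ‖ * ‖A r‖) ≤ c * ‖κ‖ * M := by
              rw [← mul_assoc]
              exact mul_le_mul_of_nonneg_left (hM r hrs) (by positivity)
            have e2 : ‖g r‖ ≤ b * r ^ m / (Nat.factorial m) := hbound r hrs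
            exact mul_le_mul e1 e2 (norm_nonneg _) (by positivity)
      · exact (continuous_const.mul ((continuous_const.mul (continuous_pow m)).div_const
          _)).intervalIntegrable _ _
    have hval : (∫ r in (0:ℝ)..u, (c * ‖κ‖ * M) * (b * r ^ m / (Nat.factorial m)))
        = (c * ‖κ‖ * M) * b * u ^ (m+1) / (Nat.factorial (m+1)) := by
      have hrw : (∫ r in (0:ℝ)..u, (c * ‖κ‖ * M) * (b * r ^ m / (Nat.factorial m)))
          = (c * ‖κ‖ * M) * b / (Nat.factorial m) * ∫ r in (0:ℝ)..u, r ^ m := by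
        rw [← intervalIntegral.integral_const_mul]
        congr 1; ext r; ring
      rw [hrw, integral_pow, zero_pow (Nat.succ_ne_zero m), Nat.factorial_succ]
      push_cast
      have h1 : ((m:ℝ) + 1) ≠ 0 := by positivity
      have h2 : ((Nat.factorial m : ℝ)) ≠ 0 := Nat.cast_ne_zero.2 (Nat.factorial_ne_zero m)
      rw [sub_zero, div_mul_div_comm, mul_comm ((Nat.factorial m : ℝ)) (((m:ℝ)+1))]
    have hnn : 0 ≤ (c * ‖κ‖ * M) * b * u ^ (m+1) / (Nat.factorial (m+1)) := by
      apply div_nonneg _ (Nat.cast_nonneg _)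
      exact mul_nonneg (mul_nonneg (mul_nonneg (mul_nonneg hc0 (norm_nonneg _)) hMnn) hb)
        (pow_nonneg hu0 _)
    calc ‖∫ r in (0:ℝ)..u, κ • A r * g r‖
        ≤ |∫ r in (0:ℝ)..u, (c * ‖κ‖ * M) * (b * r ^ m / (Nat.factorial m))| := key1
    _ = (c * ‖κ‖ * M) * b * u ^ (m+1) / (Nat.factorial (m+1)) := by
        rw [hval, abs_of_nonneg hnn]
  -- partial sums
  set S : ℕ → ℂ → ℝ → Matrix n n ℂ :=
    fun N κ u => ∑ k ∈ Finset.range (N+1), κ ^ k • picardIt A k u with hS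
  have Scont : ∀ N κ, Continuous (fun u => S N κ u) := by
    intro N κ
    exact continuous_finset_sum _ fun k _ => (picardIt_continuous hA k).const_smul (κ ^ k)
  -- recursion for partial sums
  have Srec : ∀ N (κ : ℂ) (u : ℝ),
      S (N+1) κ u = 1 + ∫ r in (0:ℝ)..u, κ • A r * S N κ r := by
    intro N κ u
    have e1 : S (N+1) κ u
        = (∑ k ∈ Finset.range (N+1), κ ^ (k+1) • picardIt A (k+1) u)
          + κ ^ 0 • picardIt A 0 u := Finset.sum_range_succ' _ _
    have e2 : κ ^ 0 • picardIt A 0 u = 1 := by simp [picardIt]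
    have e3 : ∀ k, κ ^ (k+1) • picardIt A (k+1) u
        = ∫ r in (0:ℝ)..u, κ ^ (k+1) • (A r * picardIt A k r) := by
      intro k
      show κ ^ (k+1) • (∫ r in (0:ℝ)..u, A r * picardIt A k r) = _
      rw [intervalIntegral.integral_smul]
    have e4 : (∑ k ∈ Finset.range (N+1), κ ^ (k+1) • picardIt A (k+1) u)
        = ∫ r in (0:ℝ)..u, ∑ k ∈ Finset.range (N+1), κ ^ (k+1) • (A r * picardIt A k r) := by
      rw [intervalIntegral.integral_finset_sum]
      · exact Finset.sum_congr rfl fun k _ => e3 k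
      · intro k _
        exact ((hA.matrix_mul (picardIt_continuous hA k)).const_smul
          (κ ^ (k+1))).intervalIntegrable _ _
    have e5 : ∀ r : ℝ, (∑ k ∈ Finset.range (N+1), κ ^ (k+1) • (A r * picardIt A k r))
        = κ • A r * S N κ r := by
      intro r
      rw [hS]
      simp only [Finset.mul_sum, Matrix.mul_smul]
      refine Finset.sum_congr rfl fun k _ => ?_
      rw [Matrix.smul_mul, smul_smul, pow_succ]
    rw [e1, e2, e4, add_comm]
    congr 1
    exact intervalIntegral.integral_congr fun r _ => e5 r
  -- error estimate by induction
  have err : ∀ (κ : ℂ) (N : ℕ), ∀ u ∈ Set.Icc (0:ℝ) s,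
      ‖Y κ u - S N κ u‖ ≤ (B κ * (c * ‖κ‖ * M) ^ (N+1)) * u ^ (N+1)
        / (Nat.factorial (N+1)) := by
    intro κ N
    induction N with
    | zero =>
      intro u hu
      have h0 : S 0 κ u = 1 := by simp [hS, picardIt]
      have h1 : Y κ u - S 0 κ u = ∫ r in (0:ℝ)..u, κ • A r * Y κ r := by
        rw [h0, inteq κ u]; abel
      rw [h1]
      have := helper κ (Y κ) (Ycont κ) (B κ) 0 (hBnn κ)
        (fun r hr => by simpa using gron' κ r hr) u hu
      calc ‖∫ r in (0:ℝ)..u, κ • A r * Y κ r‖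
          ≤ (c * ‖κ‖ * M) * B κ * u ^ 1 / (Nat.factorial 1) := this
      _ = (B κ * (c * ‖κ‖ * M) ^ (0+1)) * u ^ (0+1) / (Nat.factorial (0+1)) := by
          ring_nf
    | succ N ih =>
      intro u hu
      have h1 : Y κ u - S (N+1) κ u
          = ∫ r in (0:ℝ)..u, κ • A r * (Y κ r - S N κ r) := by
        calc Y κ u - S (N+1) κ u
            = (∫ r in (0:ℝ)..u, κ • A r * Y κ r)
              - ∫ r in (0:ℝ)..u, κ • A r * S N κ r := by
              rw [inteq κ u, Srec N κ u]; abel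
        _ = ∫ r in (0:ℝ)..u, (κ • A r * Y κ r - κ • A r * S N κ r) :=
              (intervalIntegral.integral_sub ((icont κ).intervalIntegrable _ _)
                (((hA.const_smul κ).matrix_mul (Scont N κ)).intervalIntegrable _ _)).symm
        _ = ∫ r in (0:ℝ)..u, κ • A r * (Y κ r - S N κ r) :=
              intervalIntegral.integral_congr fun r _ => (mul_sub _ _ _).symm
      rw [h1]
      have hb' : 0 ≤ B κ * (c * ‖κ‖ * M) ^ (N+1) :=
        mul_nonneg (hBnn κ) (pow_nonneg (by positivity) _)
      have := helper κ (fun r => Y κ r - S N κ r) ((Ycont κ).sub (Scont N κ))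
        (B κ * (c * ‖κ‖ * M) ^ (N+1)) (N+1) hb' ih u hu
      calc ‖∫ r in (0:ℝ)..u, κ • A r * (Y κ r - S N κ r)‖
          ≤ (c * ‖κ‖ * M) * (B κ * (c * ‖κ‖ * M) ^ (N+1)) * u ^ (N+1+1)
            / (Nat.factorial (N+1+1)) := this
      _ = (B κ * (c * ‖κ‖ * M) ^ (N+1+1)) * u ^ (N+1+1) / (Nat.factorial (N+1+1)) := by
          rw [pow_succ]; ring
  -- conclusion via uniform convergence on balls
  suffices H : ∀ R : ℝ, 0 < R → DifferentiableOn ℂ (fun κ => Y κ s) (Metric.ball 0 R) by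
    intro κ
    have h1 := H (‖κ‖ + 1) (by positivity)
    have h2 : Metric.ball (0:ℂ) (‖κ‖ + 1) ∈ nhds κ :=
      Metric.isOpen_ball.mem_nhds (by simp [mem_ball_zero_iff])
    exact (h1.differentiableAt h2)
  intro R hR
  have hs' : s ∈ Set.Icc (0:ℝ) s := ⟨le_refl 0 |>.trans hs, le_refl s⟩
  set x0 : ℝ := c * R * M * s with hx0
  have hx0nn : 0 ≤ x0 := by positivity
  set BR : ℝ := ‖(1 : Matrix n n ℂ)‖ * Real.exp x0 with hBR
  have hBRnn : 0 ≤ BR := by positivity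
  have bound : ∀ N : ℕ, ∀ κ ∈ Metric.ball (0:ℂ) R,
      ‖Y κ s - S N κ s‖ ≤ BR * x0 ^ (N+1) / (Nat.factorial (N+1)) := by
    intro N κ hκ
    have hκR : ‖κ‖ ≤ R := le_of_lt (mem_ball_zero_iff.1 hκ)
    refine (err κ N s hs').trans ?_
    have hBκ : B κ ≤ BR := by
      rw [hB, hBR]
      refine mul_le_mul_of_nonneg_left (Real.exp_le_exp.2 ?_) (norm_nonneg _)
      rw [hx0]
      have : c * ‖κ‖ ≤ c * R := mul_le_mul_of_nonneg_left hκR hc0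
      exact mul_le_mul_of_nonneg_right (mul_le_mul_of_nonneg_right this hMnn) hs
    have hpow : (c * ‖κ‖ * M) ^ (N+1) * s ^ (N+1) ≤ x0 ^ (N+1) := by
      rw [hx0, ← mul_pow]
      refine pow_le_pow_left₀ (by positivity) ?_ _
      have : c * ‖κ‖ ≤ c * R := mul_le_mul_of_nonneg_left hκR hc0
      exact mul_le_mul_of_nonneg_right (mul_le_mul_of_nonneg_right this hMnn) hs
    have hnum : (B κ * (c * ‖κ‖ * M) ^ (N+1)) * s ^ (N+1) ≤ BR * x0 ^ (N+1) := by
      calc (B κ * (c * ‖κ‖ * M) ^ (N+1)) * s ^ (N+1)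
          = B κ * ((c * ‖κ‖ * M) ^ (N+1) * s ^ (N+1)) := by ring
      _ ≤ BR * x0 ^ (N+1) := mul_le_mul hBκ hpow (by positivity) hBRnn
    gcongr
  have tb : Filter.Tendsto (fun N : ℕ => BR * x0 ^ (N+1) / (Nat.factorial (N+1)))
      Filter.atTop (nhds 0) := by
    have h1 := FloorSemiring.tendsto_pow_div_factorial_atTop (K := ℝ) x0
    have h2 : Filter.Tendsto (fun N : ℕ => x0 ^ (N+1) / ((Nat.factorial (N+1) : ℝ)))
        Filter.atTop (nhds 0) := h1.comp (Filter.tendsto_add_atTop_nat 1)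
    have h3 := h2.const_mul BR
    rw [mul_zero] at h3
    simpa [mul_div_assoc] using h3
  have tuo : TendstoUniformlyOn (fun N κ => S N κ s) (fun κ => Y κ s)
      Filter.atTop (Metric.ball (0:ℂ) R) := by
    refine Metric.tendstoUniformlyOn_iff.2 ?_
    intro ε hε
    filter_upwards [tb.eventually_lt_const hε] with N hN κ hκ
    rw [dist_eq_norm]
    exact lt_of_le_of_lt (bound N κ hκ) hN
  refine tuo.tendstoLocallyUniformlyOn.differentiableOn ?_ Metric.isOpen_ball
  refine Filter.Eventually.of_forall fun N => ?_
  refine Differentiable.differentiableOn ?_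
  exact Differentiable.fun_sum fun k _ => (differentiable_pow k).smul_const _

/-- If `Y(κ, ·)` is the fundamental solution of `Y' = κ A(s) Y`, `Y(κ, 0) = I`, with `A`
continuous, then for each fixed `s` the map `κ ↦ Y(κ, s)` is holomorphic on all of `ℂ`. -/
theorem magnus_stmt12 {n : Type*} [Fintype n] [DecidableEq n]
    (A : ℝ → Matrix n n ℂ) (hA : Continuous A) (t : ℝ) (ht : 0 < t)
    (Y : ℂ → ℝ → Matrix n n ℂ)
    (hY : ∀ κ : ℂ, ∀ s : ℝ, HasDerivAt (Y κ) (κ • A s * Y κ s) s)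
    (hY0 : ∀ κ : ℂ, Y κ 0 = 1) :
    ∀ s : ℝ, Differentiable ℂ (fun κ => Y κ s) := by

  intro s
  rcases le_or_gt 0 s with hs | hs
  · exact key A hA Y hY hY0 hs
  · -- time reversal
    set A' : ℝ → Matrix n n ℂ := fun u => -A (-u) with hA'
    set Y' : ℂ → ℝ → Matrix n n ℂ := fun κ u => Y κ (-u) with hY'
    have hA'c : Continuous A' := (hA.comp continuous_neg).neg
    have hY'd : ∀ κ : ℂ, ∀ u : ℝ, HasDerivAt (Y' κ) (κ • A' u * Y' κ u) u := by
      intro κ u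
      have h1 : HasDerivAt (fun v : ℝ => -v) (-1 : ℝ) u := (hasDerivAt_id u).neg
      have h2 := (hY κ (-u)).scomp u h1
      have h3 : ((-1 : ℝ) • (κ • A (-u) * Y κ (-u)))
          = κ • A' u * Y' κ u := by
        rw [hA', hY']
        simp [Matrix.neg_mul, Matrix.smul_mul]
      rw [← h3]
      exact h2
    have hY'0 : ∀ κ : ℂ, Y' κ 0 = 1 := by
      intro κ; rw [hY']; simpa using hY0 κ
    have := key A' hA'c Y' hY'd hY'0 (s := -s) (by linarith)
    have heq : (fun κ => Y κ s) = fun κ => Y' κ (-s) := by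
      funext κ; rw [hY']; simp
    rw [heq]
    exact this
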